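/- Let h : 2^E → ℤ_{≥0} be a polymatroid rank function on a finite set E. Then the set J_h = {α ∈ ℤ^E_{≥0} : Σ_{i∈E} α_i = h(E) and Σ_{i∈A} α_i ≤ h(A) for all A ⊆ E} is nonempty. -/

import Mathlib

lemma stmt9_aux {E : Type*} [Fintype E] [DecidableEq E] (h : Finset E → ℕ)
    (h0 : h ∅ = 0)
    (hmono : ∀ A B : Finset E, A ⊆ B → h A ≤ h B)
    (hsub : ∀ A B : Finset E, h (A ∪ B) + h (A ∩ B) ≤ h A + h B)
    (S : Finset E) :
    ∃ α : E → ℕ, (∑ i ∈ S, α i) = h S ∧ ∀ A ⊆ S, (∑ i ∈ A, α i) ≤ h A := by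
  induction S using Finset.induction_on with
  | empty =>
    refine ⟨fun _ => 0, by simp [h0], fun A hA => ?_⟩
    simp
  | @insert x S hx ih =>
    obtain ⟨α, hsum, hle⟩ := ih
    refine ⟨fun i => if i = x then h (insert x S) - h S else α i, ?_, ?_⟩
    · rw [Finset.sum_insert hx]
      have h1 : h S ≤ h (insert x S) := hmono _ _ (Finset.subset_insert x S)
      have h2 : (∑ i ∈ S, if i = x then h (insert x S) - h S else α i) = h S := by
        rw [← hsum]
        exact Finset.sum_congr rfl fun i hi =>
          if_neg (fun he : i = x => hx (he ▸ hi))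
      rw [if_pos rfl, h2]
      omega
    · intro A hA
      by_cases hxA : x ∈ A
      · have hBsub : A.erase x ⊆ S := by
          intro i hi
          rcases Finset.mem_erase.mp hi with ⟨hne, hiA⟩
          rcases Finset.mem_insert.mp (hA hiA) with h' | h'
          · exact absurd h' hne
          · exact h'
        have hAsplit : A = insert x (A.erase x) := (Finset.insert_erase hxA).symm
        have hxe : x ∉ A.erase x := Finset.notMem_erase x A
        rw [hAsplit, Finset.sum_insert hxe]
        have h2 : (∑ i ∈ A.erase x, if i = x then h (insert x S) - h S else α i)
            = ∑ i ∈ A.erase x, α i := Finset.sum_congr rfl fun i hi =>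
          if_neg (fun he : i = x => hx (hBsub (he ▸ hi)))
        have h3 : (∑ i ∈ A.erase x, α i) ≤ h (A.erase x) := hle _ hBsub
        -- submodularity with A and S
        have hu : A ∪ S = insert x S := by
          apply Finset.Subset.antisymm
          · exact Finset.union_subset hA (Finset.subset_insert x S)
          · intro i hi
            rcases Finset.mem_insert.mp hi with h' | h'
            · exact Finset.mem_union_left _ (h' ▸ hxA)
            · exact Finset.mem_union_right _ h'
        have hi2 : A ∩ S = A.erase x := by
          apply Finset.Subset.antisymm
          · intro i hi
            rcases Finset.mem_inter.mp hi with ⟨h1, h2⟩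
            exact Finset.mem_erase.mpr ⟨fun he => hx (he ▸ h2), h1⟩
          · intro i hi
            rcases Finset.mem_erase.mp hi with ⟨_, h1⟩
            exact Finset.mem_inter.mpr ⟨h1, hBsub hi⟩
        have hs := hsub A S
        rw [hu, hi2] at hs
        have h1 : h S ≤ h (insert x S) := hmono _ _ (Finset.subset_insert x S)
        rw [if_pos rfl, h2, ← hAsplit]
        omega
      · have : A ⊆ S := fun i hi =>
          (Finset.mem_insert.mp (hA hi)).resolve_left (fun he => hxA (he ▸ hi))
        calc (∑ i ∈ A, if i = x then h (insert x S) - h S else α i)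
            = ∑ i ∈ A, α i := Finset.sum_congr rfl fun i hi =>
              if_neg (fun he : i = x => hxA (he ▸ hi))
          _ ≤ h A := hle _ this

theorem stmt9 {E : Type*} [Fintype E] [DecidableEq E] (h : Finset E → ℕ)
    (h0 : h ∅ = 0)
    (hmono : ∀ A B : Finset E, A ⊆ B → h A ≤ h B)
    (hsub : ∀ A B : Finset E, h (A ∪ B) + h (A ∩ B) ≤ h A + h B) :
    ∃ α : E → ℕ, (∑ i, α i) = h Finset.univ ∧
      ∀ A : Finset E, (∑ i ∈ A, α i) ≤ h A := by
  obtain ⟨α, h1, h2⟩ := stmt9_aux h h0 hmono hsub Finset.univ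
  exact ⟨α, h1, fun A => h2 A (Finset.subset_univ A)⟩
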